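/- Let A be a C*-algebra and let a, b ∈ A be normal. Then a = b if and only if ρ(a,b) = 0. -/

import Mathlib

/-- The iterated commutator `C_{a,b}^n` applied to `1`, where `C_{a,b}(x) = a*x - x*b`. -/
noncomputable def citer {A : Type*} [Ring A] (a b : A) (n : ℕ) : A :=
  (fun x => a * x - x * b)^[n] 1

/-- `ρ(a,b) = limsup_n ‖C_{a,b}^n(1)‖^{1/n}`. -/
noncomputable def rho {A : Type*} [NormedRing A] (a b : A) : ℝ :=
  Filter.limsup (fun n : ℕ => ‖citer a b n‖ ^ ((n : ℝ)⁻¹)) Filter.atTop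

open NormedSpace Filter Complex Topology

set_option linter.unusedSectionVars false
set_option linter.unusedVariables false
set_option synthInstance.maxHeartbeats 1000000
set_option maxHeartbeats 1000000

noncomputable instance Stmt12.qContinuousSMul : ContinuousSMul ℚ ℂ := inferInstance

noncomputable instance Stmt12.qNormedAlgebra {B : Type*} [NormedRing B] [NormedAlgebra ℂ B] :
    NormedAlgebra ℚ B :=
  NormedAlgebra.restrictScalars ℚ ℂ B

namespace Stmt12

variable {A : Type*} [NormedRing A] [StarRing A] [CStarRing A] [CompleteSpace A]
    [NormedAlgebra ℂ A] [StarModule ℂ A]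

lemma citer_zero (a b : A) : citer a b 0 = 1 := rfl

lemma citer_succ (a b : A) (n : ℕ) :
    citer a b (n+1) = a * citer a b n - citer a b n * b := by
  rw [citer, Function.iterate_succ_apply']; rfl

/-- The operator `x ↦ a x - x b`. -/
noncomputable def Tab (a b : A) : A →L[ℂ] A :=
  ContinuousLinearMap.mul ℂ A a - (ContinuousLinearMap.mul ℂ A).flip b

lemma Tab_apply (a b x : A) : Tab a b x = a * x - x * b := rfl

lemma Tab_pow_one (a b : A) (n : ℕ) : (Tab a b ^ n) 1 = citer a b n := by
  induction n with
  | zero => simp [citer_zero]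
  | succ n ih =>
      rw [pow_succ', ContinuousLinearMap.mul_apply, ih, citer_succ, Tab_apply]

lemma exp_apply_eq (T : A →L[ℂ] A) (x : A) :
    exp T x = ∑' n : ℕ, ((n.factorial : ℂ))⁻¹ • (T ^ n) x := by
  rw [exp_eq_tsum ℂ]
  show (ContinuousLinearMap.apply ℂ A x) (∑' n : ℕ, ((n.factorial : ℂ))⁻¹ • T ^ n) = _
  rw [(ContinuousLinearMap.apply ℂ A x).map_tsum (expSeries_summable' T)]
  simp

lemma exp_smul_T_one (a b : A) (l : ℂ) :
    exp (l • Tab a b) 1 = ∑' n : ℕ, ((n.factorial : ℂ))⁻¹ • l ^ n • citer a b n := by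
  have hpow : ∀ n : ℕ, ((l • Tab a b) ^ n) 1 = l ^ n • citer a b n := by
    intro n
    induction n with
    | zero => simp [citer_zero]
    | succ n ih =>
        rw [pow_succ', ContinuousLinearMap.mul_apply, ih, ContinuousLinearMap.smul_apply,
          map_smul, smul_smul, ← pow_succ']
        rw [Tab_apply, ← citer_succ]
  rw [exp_apply_eq]
  exact tsum_congr fun n => by rw [hpow]

lemma exp_mulLeft (u x : A) :
    exp (ContinuousLinearMap.mul ℂ A u) x = exp u * x := by
  have hpow : ∀ n : ℕ, ((ContinuousLinearMap.mul ℂ A u) ^ n) x = u ^ n * x := by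
    intro n
    induction n with
    | zero => simp
    | succ n ih =>
        rw [pow_succ', ContinuousLinearMap.mul_apply, ih, pow_succ', mul_assoc]
        rfl
  rw [exp_apply_eq]
  simp_rw [hpow]
  calc (∑' n : ℕ, ((n.factorial : ℂ))⁻¹ • (u ^ n * x))
      = ∑' n : ℕ, ((ContinuousLinearMap.mul ℂ A).flip x) (((n.factorial : ℂ))⁻¹ • u ^ n) := by
        simp [smul_mul_assoc]
    _ = exp u * x := by
        rw [← ((ContinuousLinearMap.mul ℂ A).flip x).map_tsum (expSeries_summable' u),
          exp_eq_tsum ℂ]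
        rfl

lemma exp_mulRight (v x : A) :
    exp ((ContinuousLinearMap.mul ℂ A).flip v) x = x * exp v := by
  have hpow : ∀ n : ℕ, (((ContinuousLinearMap.mul ℂ A).flip v) ^ n) x = x * v ^ n := by
    intro n
    induction n with
    | zero => simp
    | succ n ih =>
        rw [pow_succ', ContinuousLinearMap.mul_apply, ih, pow_succ, ← mul_assoc]
        rfl
  rw [exp_apply_eq]
  simp_rw [hpow]
  calc (∑' n : ℕ, ((n.factorial : ℂ))⁻¹ • (x * v ^ n))
      = ∑' n : ℕ, (ContinuousLinearMap.mul ℂ A x) (((n.factorial : ℂ))⁻¹ • v ^ n) := by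
        simp [mul_smul_comm]
    _ = x * exp v := by
        rw [← (ContinuousLinearMap.mul ℂ A x).map_tsum (expSeries_summable' v), exp_eq_tsum ℂ]
        rfl

lemma exp_T_eq (a b : A) (l : ℂ) :
    exp (l • Tab a b) 1 = exp (l • a) * exp ((-l) • b) := by
  have hsplit : l • Tab a b =
      ContinuousLinearMap.mul ℂ A (l • a) + (ContinuousLinearMap.mul ℂ A).flip ((-l) • b) := by
    ext x
    simp [Tab_apply, smul_sub, smul_mul_assoc, mul_smul_comm, sub_eq_add_neg, neg_smul]
  have hcomm : Commute (ContinuousLinearMap.mul ℂ A (l • a))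
      ((ContinuousLinearMap.mul ℂ A).flip ((-l) • b)) := by
    refine ContinuousLinearMap.ext fun x => ?_
    simp only [ContinuousLinearMap.mul_apply]
    show (l • a) * (x * ((-l) • b)) = ((l • a) * x) * ((-l) • b)
    rw [mul_assoc]
  rw [hsplit, exp_add_of_commute hcomm, ContinuousLinearMap.mul_apply, exp_mulRight, one_mul,
    exp_mulLeft]

lemma F_le (a b : A) {e M : ℝ} (he : 0 < e) (hM : 0 ≤ M)
    (hgb : ∀ n, ‖citer a b n‖ ≤ M * e ^ n) (w : ℂ) :
    ‖exp (w • a) * exp ((-w) • b)‖ ≤ M * Real.exp (e * ‖w‖) := by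
  rw [← exp_T_eq, exp_smul_T_one]
  have hb : ∀ n : ℕ, ‖((n.factorial : ℂ))⁻¹ • w ^ n • citer a b n‖
      ≤ M * ((e * ‖w‖) ^ n / n.factorial) := by
    intro n
    rw [norm_smul, norm_smul, norm_inv, norm_pow, Complex.norm_natCast, mul_pow, div_eq_inv_mul]
    calc ((n.factorial : ℝ))⁻¹ * (‖w‖ ^ n * ‖citer a b n‖)
        ≤ ((n.factorial : ℝ))⁻¹ * (‖w‖ ^ n * (M * e ^ n)) := by
          gcongr
          exact hgb n
      _ = M * (((n.factorial : ℝ))⁻¹ * (e ^ n * ‖w‖ ^ n)) := by ring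
  have hg : Summable fun n : ℕ => M * ((e * ‖w‖) ^ n / n.factorial) :=
    (Real.summable_pow_div_factorial (e * ‖w‖)).mul_left M
  calc ‖∑' n : ℕ, ((n.factorial : ℂ))⁻¹ • w ^ n • citer a b n‖
      ≤ ∑' n : ℕ, M * ((e * ‖w‖) ^ n / n.factorial) := tsum_of_norm_bounded hg.hasSum hb
    _ = M * ∑' n : ℕ, ((e * ‖w‖) ^ n / n.factorial) := tsum_mul_left
    _ = M * Real.exp (e * ‖w‖) := by rw [Real.exp_eq_exp_ℝ, exp_eq_tsum_div]

lemma norm_exp_skew_mul (s x : A) (hs : star s = -s) : ‖exp s * x‖ = ‖x‖ := by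
  have h1 : star (exp s) * exp s = 1 := by
    rw [star_exp, hs, ← exp_add_of_commute (Commute.refl s).neg_left, neg_add_cancel,
      NormedSpace.exp_zero]
  have h2 : star (exp s * x) * (exp s * x) = star x * x := by
    rw [star_mul, mul_assoc, ← mul_assoc (star (exp s)), h1, one_mul]
  have h3 := CStarRing.norm_star_mul_self (x := exp s * x)
  rw [h2, CStarRing.norm_star_mul_self] at h3
  exact (mul_self_inj (norm_nonneg _) (norm_nonneg _)).mp h3.symm

lemma norm_mul_exp_skew (s x : A) (hs : star s = -s) : ‖x * exp s‖ = ‖x‖ := by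
  have h1 : exp s * star (exp s) = 1 := by
    rw [star_exp, hs, ← exp_add_of_commute (Commute.refl s).neg_right, add_neg_cancel,
      NormedSpace.exp_zero]
  have h2 : (x * exp s) * star (x * exp s) = x * star x := by
    rw [star_mul, mul_assoc, ← mul_assoc (exp s), h1, one_mul]
  have h3 := CStarRing.norm_self_mul_star (x := x * exp s)
  rw [h2, CStarRing.norm_self_mul_star] at h3
  exact (mul_self_inj (norm_nonneg _) (norm_nonneg _)).mp h3.symm

lemma star_skew_part (c : A) (l : ℂ) :
    star (l • star c - (starRingEnd ℂ l) • c) = -(l • star c - (starRingEnd ℂ l) • c) := by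
  rw [star_sub, star_smul, star_smul, star_star]
  simp [neg_sub]

lemma exp_decompL (c : A) (hc : Commute (star c) c) (l : ℂ) :
    exp (l • star c) =
      exp (l • star c - (starRingEnd ℂ l) • c) * exp ((starRingEnd ℂ l) • c) := by
  rw [← exp_add_of_commute
    (((hc.smul_left l).smul_right _).sub_left (((Commute.refl c).smul_left _).smul_right _)),
    sub_add_cancel]

lemma exp_decompR (c : A) (hc : Commute (star c) c) (l : ℂ) :
    exp (l • star c) =
      exp ((starRingEnd ℂ l) • c) * exp (l • star c - (starRingEnd ℂ l) • c) := by
  rw [← exp_add_of_commute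
    ((((hc.symm.smul_left _).smul_right l)).sub_right
      (((Commute.refl c).smul_left _).smul_right _)),
    add_sub_cancel]

lemma exp_smul_same (a : A) (s t : ℂ) :
    exp (s • a) * exp (t • a) = exp ((s + t) • a) := by
  rw [add_smul, exp_add_of_commute (((Commute.refl a).smul_left s).smul_right t)]

/-- The auxiliary entire function. -/
noncomputable def gmap (a b : A) (u : ℂ) (z : ℂ) : A :=
  exp ((z * u) • star a) * (exp ((z * -(starRingEnd ℂ u)) • a) *
    (exp ((z * starRingEnd ℂ u) • b) * exp ((z * -u) • star b)))

lemma gmap_diff (a b : A) (u : ℂ) : Differentiable ℂ (gmap a b u) := by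
  have h : ∀ (c : ℂ) (x : A), Differentiable ℂ (fun z : ℂ => exp ((z * c) • x)) := by
    intro c x
    have h1 : Differentiable ℂ (fun u : ℂ => exp (u • x)) :=
      fun v => (hasDerivAt_exp_smul_const (𝕂 := ℂ) x v).differentiableAt
    exact h1.comp (differentiable_id.mul_const c)
  exact ((h u (star a)).mul (((h _ a)).mul ((h _ b).mul (h _ (star b)))))

lemma gmap_norm (a b : A) (ha : Commute (star a) a) (hb : Commute (star b) b) (u z : ℂ) :
    ‖gmap a b u z‖ =
      ‖exp (((starRingEnd ℂ z - z) * starRingEnd ℂ u) • a) *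
        exp ((-((starRingEnd ℂ z - z) * starRingEnd ℂ u)) • b)‖ := by
  set w : ℂ := (starRingEnd ℂ z - z) * starRingEnd ℂ u with hw
  set E3 : A := exp ((z * starRingEnd ℂ u) • b)
  calc ‖gmap a b u z‖
      = ‖exp ((z * u) • star a - (starRingEnd ℂ (z * u)) • a) *
          (exp ((starRingEnd ℂ (z * u)) • a) * (exp ((z * -(starRingEnd ℂ u)) • a) *
            (E3 * exp ((z * -u) • star b))))‖ := by
        rw [gmap, exp_decompL a ha (z * u), mul_assoc]
    _ = ‖exp ((starRingEnd ℂ (z * u)) • a) * (exp ((z * -(starRingEnd ℂ u)) • a) *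
          (E3 * exp ((z * -u) • star b)))‖ :=
        norm_exp_skew_mul _ _ (star_skew_part a _)
    _ = ‖exp (w • a) * (E3 * exp ((z * -u) • star b))‖ := by
        rw [← mul_assoc, exp_smul_same]
        congr 3
        simp only [map_mul]
        ring_nf
        rw [hw]; congr 1; ring
    _ = ‖(exp (w • a) * (E3 * exp ((starRingEnd ℂ (z * -u)) • b))) *
          exp ((z * -u) • star b - (starRingEnd ℂ (z * -u)) • b)‖ := by
        rw [exp_decompR b hb (z * -u), ← mul_assoc E3, ← mul_assoc]
    _ = ‖exp (w • a) * (E3 * exp ((starRingEnd ℂ (z * -u)) • b))‖ :=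
        norm_mul_exp_skew _ _ (star_skew_part b _)
    _ = ‖exp (w • a) * exp ((-w) • b)‖ := by
        rw [exp_smul_same]
        congr 3
        simp only [map_mul, map_neg]
        ring_nf
        rw [hw]; congr 1; ring

lemma pl_uhp {h : ℂ → A} (hdiff : Differentiable ℂ h)
    (hb : ∀ e : ℝ, 0 < e → ∃ M : ℝ, 1 ≤ M ∧ ∀ z : ℂ, ‖h z‖ ≤ M * Real.exp (e * |z.im|))
    (hr : ∀ t : ℝ, ‖h (t : ℂ)‖ ≤ 1) :
    ∀ z : ℂ, 0 ≤ z.im → ‖h z‖ ≤ 1 := by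
  intro z hz
  rcases eq_or_lt_of_le hz with hz0 | hz0
  · have hzz : z = ((z.re : ℝ) : ℂ) := Complex.ext (by simp) (by simp [← hz0])
    rw [hzz]; exact hr z.re
  · have key : ∀ e : ℝ, 0 < e → ‖h z‖ ≤ Real.exp (e * z.im) := by
      intro e he
      obtain ⟨M, hM1, hMb⟩ := hb e he
      have hM0 : (0:ℝ) < M := lt_of_lt_of_le one_pos hM1
      have hstrip : ∀ L : ℝ, z.im < L → ‖h z‖ ≤ M ^ (z.im / L) * Real.exp (e * z.im) := by
        intro L hL
        have hL0 : (0:ℝ) < L := lt_trans hz0 hL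
        set c : ℂ := Complex.I * (L : ℂ) with hc
        set f : ℂ → A := fun w => h (c * w) with hf
        have him : ∀ w : ℂ, (c * w).im = L * w.re := by
          intro w; simp [hc]
        have hre : ∀ w : ℂ, (c * w).re = -(L * w.im) := by
          intro w; simp [hc]
        set w0 : ℂ := ⟨z.im / L, -z.re / L⟩ with hw0
        have hcw0 : c * w0 = z := by
          apply Complex.ext
          · rw [hre]; show -(L * (-z.re / L)) = z.re; field_simp
          · rw [him]; show L * (z.im / L) = z.im; field_simp
        have hd : DiffContOnCl ℂ f (Complex.HadamardThreeLines.verticalStrip 0 1) :=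
          (hdiff.comp ((differentiable_const c).mul differentiable_id)).diffContOnCl
        have habs : ∀ w : ℂ, w.re ∈ Set.Icc (0:ℝ) 1 → |(c * w).im| ≤ L := by
          intro w hw
          rw [him, _root_.abs_of_nonneg (mul_nonneg hL0.le hw.1)]
          calc L * w.re ≤ L * 1 := by gcongr; exact hw.2
            _ = L := mul_one L
        have hB : BddAbove ((norm ∘ f) '' Complex.HadamardThreeLines.verticalClosedStrip 0 1) := by
          refine ⟨M * Real.exp (e * L), ?_⟩
          rintro r ⟨w, hwmem, rfl⟩
          refine (hMb (c * w)).trans ?_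
          gcongr
          exact habs w hwmem
        have ha0 : ∀ w : ℂ, w ∈ re ⁻¹' {0} → ‖f w‖ ≤ 1 := by
          intro w hw
          have hw0 : w.re = 0 := hw
          have : c * w = (((c * w).re : ℝ) : ℂ) :=
            Complex.ext (by simp) (by simp [him, hw0])
          show ‖h (c * w)‖ ≤ 1
          rw [this]; exact hr _
        have hb1 : ∀ w : ℂ, w ∈ re ⁻¹' {1} → ‖f w‖ ≤ M * Real.exp (e * L) := by
          intro w hw
          have hw1 : w.re = 1 := hw
          refine (hMb (c * w)).trans ?_
          gcongr
          exact habs w (by rw [hw1]; exact ⟨zero_le_one, le_refl 1⟩)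
        have hmem : w0 ∈ Complex.HadamardThreeLines.verticalClosedStrip 0 1 := by
          show w0.re ∈ Set.Icc (0:ℝ) 1
          constructor
          · exact div_nonneg hz0.le hL0.le
          · rw [div_le_one hL0]; exact hL.le
        have h3 := Complex.HadamardThreeLines.norm_le_interp_of_mem_verticalClosedStrip₀₁'
          f hmem hd hB ha0 hb1
        rw [show f w0 = h z by rw [hf]; simp only []; rw [hcw0]] at h3
        have hw0re : w0.re = z.im / L := rfl
        rw [hw0re, Real.one_rpow, one_mul,
          Real.mul_rpow hM0.le (Real.exp_nonneg _), ← Real.exp_mul] at h3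
        refine h3.trans ?_
        have : e * L * (z.im / L) = e * z.im := by field_simp
        rw [this]
      have hlim : Tendsto (fun L : ℝ => M ^ (z.im / L) * Real.exp (e * z.im)) atTop
          (𝓝 (Real.exp (e * z.im))) := by
        have h1 : Tendsto (fun L : ℝ => z.im / L) atTop (𝓝 0) :=
          tendsto_const_nhds.div_atTop tendsto_id
        have hcont : Continuous fun t : ℝ => M ^ t := by
          have : (fun t : ℝ => M ^ t) = fun t => Real.exp (Real.log M * t) := by
            funext t; rw [Real.rpow_def_of_pos hM0]
          rw [this]
          exact Real.continuous_exp.comp (continuous_const.mul continuous_id)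
        have h2 : Tendsto (fun L : ℝ => M ^ (z.im / L)) atTop (𝓝 1) := by
          have := (hcont.tendsto 0).comp h1
          rw [Real.rpow_zero] at this
          exact this
        simpa using h2.mul_const (Real.exp (e * z.im))
      refine ge_of_tendsto hlim ?_
      filter_upwards [eventually_gt_atTop z.im] with L hL using hstrip L hL
    have hlim2 : Tendsto (fun e : ℝ => Real.exp (e * z.im)) (𝓝[>] 0) (𝓝 1) := by
      have hcont2 : Continuous fun e : ℝ => Real.exp (e * z.im) :=
        Real.continuous_exp.comp (continuous_id.mul continuous_const)
      have h1 := hcont2.tendsto 0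
      simp only [zero_mul, Real.exp_zero] at h1
      exact h1.mono_left nhdsWithin_le_nhds
    refine ge_of_tendsto hlim2 ?_
    filter_upwards [self_mem_nhdsWithin] with e he using key e he

lemma pl_bound {h : ℂ → A} (hdiff : Differentiable ℂ h)
    (hb : ∀ e : ℝ, 0 < e → ∃ M : ℝ, 1 ≤ M ∧ ∀ z : ℂ, ‖h z‖ ≤ M * Real.exp (e * |z.im|))
    (hr : ∀ t : ℝ, ‖h (t : ℂ)‖ ≤ 1) (z : ℂ) : ‖h z‖ ≤ 1 := by
  rcases le_or_gt 0 z.im with hz | hz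
  · exact pl_uhp hdiff hb hr z hz
  · have hneg : ∀ w : ℂ, 0 ≤ w.im → ‖h (-w)‖ ≤ 1 := by
      refine pl_uhp (hdiff.comp differentiable_neg) ?_ ?_
      · intro e he
        obtain ⟨M, hM1, hMb⟩ := hb e he
        exact ⟨M, hM1, fun w => by simpa using hMb (-w)⟩
      · intro t
        have := hr (-t)
        push_cast at this
        simpa using this
    have := hneg (-z) (by simp; exact hz.le)
    simpa using this

lemma rho_self (a : A) : rho a a = 0 := by
  have hz : ∀ n : ℕ, citer a a (n+1) = 0 := by
    intro n
    induction n with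
    | zero => rw [citer_succ, citer_zero, mul_one, one_mul, sub_self]
    | succ n ih => rw [citer_succ, ih, mul_zero, zero_mul, sub_self]
  have hev : (fun n : ℕ => ‖citer a a n‖ ^ ((n:ℝ)⁻¹)) =ᶠ[atTop] (fun _ => (0:ℝ)) := by
    refine eventually_atTop.2 ⟨1, fun n hn => ?_⟩
    match n, hn with
    | (m+1), _ =>
      show ‖citer a a (m+1)‖ ^ (((m+1:ℕ):ℝ))⁻¹ = 0
      rw [hz m, norm_zero, Real.zero_rpow (inv_ne_zero (Nat.cast_ne_zero.2 (Nat.succ_ne_zero m)))]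
  rw [rho, limsup_congr hev, limsup_const]

lemma citer_norm_le (a b : A) (n : ℕ) : ‖citer a b n‖ ≤ ‖(1:A)‖ * (‖a‖ + ‖b‖) ^ n := by
  induction n with
  | zero => simp [citer_zero]
  | succ n ih =>
      rw [citer_succ]
      have h0 : (0:ℝ) ≤ ‖a‖ + ‖b‖ := by positivity
      calc ‖a * citer a b n - citer a b n * b‖
          ≤ ‖a * citer a b n‖ + ‖citer a b n * b‖ := norm_sub_le _ _
        _ ≤ ‖a‖ * ‖citer a b n‖ + ‖citer a b n‖ * ‖b‖ :=
            add_le_add (norm_mul_le _ _) (norm_mul_le _ _)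
        _ = (‖a‖ + ‖b‖) * ‖citer a b n‖ := by ring
        _ ≤ (‖a‖ + ‖b‖) * (‖(1:A)‖ * (‖a‖ + ‖b‖) ^ n) := by gcongr
        _ = ‖(1:A)‖ * (‖a‖ + ‖b‖) ^ (n+1) := by ring

lemma citer_geom (a b : A) (h : rho a b = 0) {e : ℝ} (he : 0 < e) :
    ∃ M : ℝ, 1 ≤ M ∧ ∀ n : ℕ, ‖citer a b n‖ ≤ M * e ^ n := by
  set u : ℕ → ℝ := fun n => ‖citer a b n‖ ^ ((n:ℝ)⁻¹) with hu
  set C : ℝ := max 1 ‖(1:A)‖ * max 1 (‖a‖ + ‖b‖) with hC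
  have hK : (0:ℝ) ≤ ‖a‖ + ‖b‖ := by positivity
  have hbd : ∀ n : ℕ, 1 ≤ n → u n ≤ C := by
    intro n hn
    have hn0 : (n:ℝ) ≠ 0 := Nat.cast_ne_zero.2 (by omega)
    have hinv0 : (0:ℝ) ≤ (n:ℝ)⁻¹ := by positivity
    have hinv1 : ((n:ℝ))⁻¹ ≤ 1 := by
      rw [inv_le_one_iff₀]
      right
      exact_mod_cast hn
    have step1 : u n ≤ (‖(1:A)‖ * (‖a‖ + ‖b‖) ^ n) ^ ((n:ℝ)⁻¹) :=
      Real.rpow_le_rpow (norm_nonneg _) (citer_norm_le a b n) hinv0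
    rw [Real.mul_rpow (norm_nonneg _) (pow_nonneg hK n)] at step1
    have e1 : (‖(1:A)‖ : ℝ) ^ ((n:ℝ)⁻¹) ≤ max 1 ‖(1:A)‖ := by
      rcases le_total ‖(1:A)‖ 1 with h1 | h1
      · exact (Real.rpow_le_one (norm_nonneg _) h1 hinv0).trans (le_max_left _ _)
      · calc (‖(1:A)‖ : ℝ) ^ ((n:ℝ)⁻¹) ≤ ‖(1:A)‖ ^ (1:ℝ) :=
            Real.rpow_le_rpow_of_exponent_le h1 hinv1
          _ = ‖(1:A)‖ := Real.rpow_one _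
          _ ≤ max 1 ‖(1:A)‖ := le_max_right _ _
    have e2 : (((‖a‖ + ‖b‖) ^ n : ℝ)) ^ ((n:ℝ)⁻¹) ≤ max 1 (‖a‖ + ‖b‖) := by
      rw [← Real.rpow_natCast (‖a‖ + ‖b‖) n, ← Real.rpow_mul hK, mul_inv_cancel₀ hn0,
        Real.rpow_one]
      exact le_max_right _ _
    refine step1.trans ?_
    rw [hC]
    exact mul_le_mul e1 e2 (Real.rpow_nonneg (pow_nonneg hK n) _)
      (le_trans zero_le_one (le_max_left _ _))
  have hisbdd : IsBoundedUnder (· ≤ ·) atTop u :=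
    ⟨C, eventually_atTop.2 ⟨1, fun n hn => hbd n hn⟩⟩
  have hev : ∀ᶠ n in atTop, u n < e := by
    refine Filter.eventually_lt_of_limsup_lt ?_ hisbdd
    rw [show limsup u atTop = rho a b from rfl, h]
    exact he
  obtain ⟨N, hN⟩ := eventually_atTop.mp hev
  set N' := max N 1 with hN'
  have hgeo : ∀ n, N' ≤ n → ‖citer a b n‖ ≤ e ^ n := by
    intro n hn
    have hn1 : 1 ≤ n := le_trans (le_max_right N 1) hn
    have hun := hN n (le_trans (le_max_left N 1) hn)
    calc ‖citer a b n‖ = (u n) ^ n :=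
        (Real.rpow_inv_natCast_pow (norm_nonneg _) (by omega)).symm
      _ ≤ e ^ n := pow_le_pow_left₀ (Real.rpow_nonneg (norm_nonneg _) _) hun.le n
  refine ⟨1 + ∑ k ∈ Finset.range N', ‖citer a b k‖ / e ^ k, ?_, ?_⟩
  · have : (0:ℝ) ≤ ∑ k ∈ Finset.range N', ‖citer a b k‖ / e ^ k :=
      Finset.sum_nonneg fun k _ => div_nonneg (norm_nonneg _) (pow_nonneg he.le k)
    linarith
  · intro n
    have hsum0 : (0:ℝ) ≤ ∑ k ∈ Finset.range N', ‖citer a b k‖ / e ^ k :=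
      Finset.sum_nonneg fun k _ => div_nonneg (norm_nonneg _) (pow_nonneg he.le k)
    rcases lt_or_ge n N' with hlt | hge
    · have h1 : ‖citer a b n‖ / e ^ n ≤ ∑ k ∈ Finset.range N', ‖citer a b k‖ / e ^ k :=
        Finset.single_le_sum (f := fun k => ‖citer a b k‖ / e ^ k)
          (fun k _ => div_nonneg (norm_nonneg _) (pow_nonneg he.le k)) (Finset.mem_range.2 hlt)
      have h2 : ‖citer a b n‖ = (‖citer a b n‖ / e ^ n) * e ^ n := by
        field_simp
      rw [h2]
      have he2 : (0:ℝ) < e ^ n := pow_pos he n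
      gcongr
      linarith
    · calc ‖citer a b n‖ ≤ e ^ n := hgeo n hge
        _ ≤ (1 + ∑ k ∈ Finset.range N', ‖citer a b k‖ / e ^ k) * e ^ n :=
          le_mul_of_one_le_left (pow_nonneg he.le n) (by linarith)

lemma exp_param_inj (x y : A)
    (hxy : ∀ t : ℝ, exp ((t : ℂ) • x) = exp ((t : ℂ) • y)) : x = y := by
  have hder : ∀ v : A, HasDerivAt (fun t : ℝ => exp ((t : ℂ) • v)) v 0 := by
    intro v
    have h0 := hasDerivAt_exp_smul_const (𝕂 := ℝ) v (0 : ℝ)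
    have hcast : (fun t : ℝ => exp (t • v)) = fun t : ℝ => exp ((t : ℂ) • v) := by
      funext t
      rw [Complex.coe_smul]
    rw [hcast] at h0
    simpa [NormedSpace.exp_zero] using h0
  have hx := hder x
  have hy := hder y
  rw [funext hxy] at hx
  exact hx.unique hy

end Stmt12

/-- Normal elements of a C*-algebra are equal iff ρ(a,b) = 0. -/
theorem stmt_12 {A : Type*} [NormedRing A] [StarRing A] [CStarRing A] [CompleteSpace A]
    [NormedAlgebra ℂ A] [StarModule ℂ A]
    (a b : A) (ha : IsStarNormal a) (hb : IsStarNormal b) :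
    a = b ↔ rho a b = 0 := by
  constructor
  · rintro rfl
    exact Stmt12.rho_self a
  · intro h
    rcases subsingleton_or_nontrivial A with hs | hnt
    · exact Subsingleton.elim a b
    have hna : Commute (star a) a := ha.star_comm_self
    have hnb : Commute (star b) b := hb.star_comm_self
    have hwnorm : ∀ (u z : ℂ), ‖u‖ = 1 →
        ‖(starRingEnd ℂ z - z) * starRingEnd ℂ u‖ = 2 * |z.im| := by
      intro u z hu
      rw [norm_mul, RCLike.norm_conj, hu, mul_one]
      have hrw : starRingEnd ℂ z - z = ((-2 * z.im : ℝ) : ℂ) * Complex.I := by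
        apply Complex.ext
        · simp
        · simp; ring
      rw [hrw, norm_mul, Complex.norm_I, mul_one, Complex.norm_real, Real.norm_eq_abs, abs_mul]
      simp [abs_of_nonneg]
    have hg1 : ∀ u : ℂ, ‖u‖ = 1 → ∀ z : ℂ, Stmt12.gmap a b u z = 1 := by
      intro u hu
      have hbound : ∀ z, ‖Stmt12.gmap a b u z‖ ≤ 1 := by
        apply Stmt12.pl_bound (Stmt12.gmap_diff a b u)
        · intro e he
          obtain ⟨M, hM1, hMb⟩ := Stmt12.citer_geom a b h (half_pos he)
          refine ⟨M, hM1, fun z => ?_⟩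
          rw [Stmt12.gmap_norm a b hna hnb u z]
          refine (Stmt12.F_le a b (half_pos he) (by linarith) hMb _).trans (le_of_eq ?_)
          rw [hwnorm u z hu]
          ring_nf
        · intro t
          rw [Stmt12.gmap_norm a b hna hnb u (t : ℂ)]
          have h0 : (starRingEnd ℂ (t:ℂ) - (t:ℂ)) * starRingEnd ℂ u = 0 := by
            rw [Complex.conj_ofReal, sub_self, zero_mul]
          rw [h0, zero_smul, neg_zero, zero_smul, NormedSpace.exp_zero, one_mul,
            CStarRing.norm_one]
      intro z
      have hrange : Bornology.IsBounded (Set.range (Stmt12.gmap a b u)) :=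
        isBounded_iff_forall_norm_le.2 ⟨1, by rintro x ⟨z, rfl⟩; exact hbound z⟩
      have hconst := (Stmt12.gmap_diff a b u).apply_eq_apply_of_bounded hrange z 0
      rw [hconst]
      simp [Stmt12.gmap, NormedSpace.exp_zero]
    have hE : ∀ l : ℂ, NormedSpace.exp (l • star a) *
        (NormedSpace.exp ((-(starRingEnd ℂ l)) • a) *
        (NormedSpace.exp ((starRingEnd ℂ l) • b) * NormedSpace.exp ((-l) • star b))) = 1 := by
      intro l
      rcases eq_or_ne l 0 with rfl | hl
      · simp [NormedSpace.exp_zero]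
      · set u : ℂ := ((‖l‖ : ℝ) : ℂ)⁻¹ * l with hudef
        have hl0 : ((‖l‖ : ℝ) : ℂ) ≠ 0 := by
          simpa using norm_ne_zero_iff.2 hl
        have hu : ‖u‖ = 1 := by
          rw [hudef, norm_mul, norm_inv, Complex.norm_real, Real.norm_eq_abs, _root_.abs_of_nonneg (norm_nonneg l)]
          exact inv_mul_cancel₀ (norm_ne_zero_iff.2 hl)
        have hzu : ((‖l‖ : ℝ) : ℂ) * u = l := by
          rw [hudef, ← mul_assoc, mul_inv_cancel₀ hl0, one_mul]
        have hzcu : ((‖l‖ : ℝ) : ℂ) * starRingEnd ℂ u = starRingEnd ℂ l := by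
          rw [hudef, map_mul, map_inv₀, Complex.conj_ofReal, ← mul_assoc,
            mul_inv_cancel₀ hl0, one_mul]
        have hgz := hg1 u hu ((‖l‖ : ℝ) : ℂ)
        rw [Stmt12.gmap,
          show ((‖l‖:ℝ):ℂ) * -(starRingEnd ℂ u) = -(starRingEnd ℂ l) by rw [mul_neg, hzcu],
          show ((‖l‖:ℝ):ℂ) * -u = -l by rw [mul_neg, hzu], hzu, hzcu] at hgz
        exact hgz
    have hP : ∀ l : ℂ, NormedSpace.exp (l • star a) *
        NormedSpace.exp ((-(starRingEnd ℂ l)) • a)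
        = NormedSpace.exp (l • star b) * NormedSpace.exp ((-(starRingEnd ℂ l)) • b) := by
      intro l
      have hQR : (NormedSpace.exp ((starRingEnd ℂ l) • b) *
          NormedSpace.exp ((-l) • star b)) *
          (NormedSpace.exp (l • star b) * NormedSpace.exp ((-(starRingEnd ℂ l)) • b)) = 1 := by
        rw [mul_assoc, ← mul_assoc (NormedSpace.exp ((-l) • star b)), Stmt12.exp_smul_same,
          neg_add_cancel, zero_smul, NormedSpace.exp_zero, one_mul, Stmt12.exp_smul_same,
          add_neg_cancel, zero_smul, NormedSpace.exp_zero]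
      have h1 : (NormedSpace.exp (l • star a) *
          NormedSpace.exp ((-(starRingEnd ℂ l)) • a)) *
          ((NormedSpace.exp ((starRingEnd ℂ l) • b) * NormedSpace.exp ((-l) • star b)) *
            (NormedSpace.exp (l • star b) * NormedSpace.exp ((-(starRingEnd ℂ l)) • b)))
          = NormedSpace.exp (l • star b) * NormedSpace.exp ((-(starRingEnd ℂ l)) • b) := by
        rw [← mul_assoc, mul_assoc (NormedSpace.exp (l • star a)), hE l, one_mul]
      rw [hQR, mul_one] at h1
      exact h1
    have hS : ∀ l : ℂ, NormedSpace.exp (l • star a + (-(starRingEnd ℂ l)) • a)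
        = NormedSpace.exp (l • star b + (-(starRingEnd ℂ l)) • b) := by
      intro l
      rw [NormedSpace.exp_add_of_commute ((hna.smul_left l).smul_right _),
        NormedSpace.exp_add_of_commute ((hnb.smul_left l).smul_right _)]
      exact hP l
    have h1 : star a - a = star b - b := by
      apply Stmt12.exp_param_inj
      intro t
      have hst := hS ((t : ℝ) : ℂ)
      rw [Complex.conj_ofReal] at hst
      have hrwa : ∀ c : A, ((t:ℝ):ℂ) • star c + (-((t:ℝ):ℂ)) • c
          = ((t:ℝ):ℂ) • (star c - c) := by
        intro c
        rw [smul_sub, neg_smul, ← sub_eq_add_neg]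
      rw [hrwa a, hrwa b] at hst
      exact hst
    have h2 : star a + a = star b + b := by
      have h2' : Complex.I • (star a + a) = Complex.I • (star b + b) := by
        apply Stmt12.exp_param_inj
        intro t
        have hst := hS (((t:ℝ):ℂ) * Complex.I)
        rw [map_mul, Complex.conj_ofReal, Complex.conj_I] at hst
        have hrwa : ∀ c : A, (((t:ℝ):ℂ) * Complex.I) • star c +
            (-(((t:ℝ):ℂ) * -Complex.I)) • c = ((t:ℝ):ℂ) • (Complex.I • (star c + c)) := by
          intro c
          rw [mul_neg, neg_neg, ← smul_add, mul_smul]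
        rw [hrwa a, hrwa b] at hst
        exact hst
      have h3 := congrArg (fun v => Complex.I⁻¹ • v) h2'
      simpa [smul_smul, inv_mul_cancel₀ Complex.I_ne_zero] using h3
    have h3 : star a = star b := by
      have hsum : star a + star a = star b + star b := by
        calc star a + star a = (star a - a) + (star a + a) := by abel
          _ = (star b - b) + (star b + b) := by rw [h1, h2]
          _ = star b + star b := by abel
      have h2s : (2:ℂ) • star a = (2:ℂ) • star b := by
        rw [two_smul, two_smul]; exact hsum
      have h4 := congrArg (fun v => ((2:ℂ))⁻¹ • v) h2s
      simpa [smul_smul, inv_mul_cancel₀ (two_ne_zero (α := ℂ))] using h4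
    exact star_injective h3
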